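/- Let s ≥ 1, L ≥ 2s³ + 5s² + 1 and L ≤ k ≤ s + L be integers. Then for every integer n ≥ 0, the number of partitions in C²_{L,s,2}(n) is at most the number of partitions in F²_{L,s,k}(n), where: C²_{L,s,2}(n) is the set of partitions of n with all parts in {s+1, …, s+L}, with no part equal to k, with no part equal to a·s for any integer a ≥ 2, and having some part j with s+1 ≤ j ≤ 2s² + 5s − 1 occurring at least s times; and F²_{L,s,k}(n) is the set of partitions of n with smallest part s, largest part at most s+L, no part equal to k, in which the part s occurs exactly once, there exists an integer i ≥ 2 such that the part i·s occurs exactly once, and for every integer j ∉ {1, i} the part j·s does not occur. -/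

import Mathlib

open Multiset

noncomputable def mypart12 (s j : ℕ) {n : ℕ} (p : n.Partition)
    (h2s : 2 ≤ s) (hj1 : s + 1 ≤ j) (hcnt : s ≤ p.parts.count j) : n.Partition where
  parts := (j - 1) * s ::ₘ s ::ₘ (p.parts - replicate s j)
  parts_pos := by
    intro x hx
    simp only [mem_cons] at hx
    rcases hx with rfl | rfl | hx
    · exact Nat.mul_pos (by omega) (by omega)
    · omega
    · exact p.parts_pos (mem_of_le (tsub_le_self) hx)
  parts_sum := by
    have hrep : replicate s j ≤ p.parts := le_count_iff_replicate_le.mp hcnt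
    have h1 : (p.parts - replicate s j).sum + (replicate s j).sum = p.parts.sum := by
      rw [← Multiset.sum_add, tsub_add_cancel_of_le hrep]
    rw [sum_replicate, smul_eq_mul] at h1
    have h2 : (j - 1) * s + s = s * j := by
      have : (j - 1) + 1 = j := by omega
      calc (j-1)*s + s = ((j-1)+1)*s := by ring
        _ = j * s := by rw [this]
        _ = s * j := by ring
    simp only [sum_cons]
    have := p.parts_sum
    omega

lemma mypart12_prop (s L k : ℕ) {n : ℕ} (p : n.Partition) (j : ℕ)
    (h2s : 2 ≤ s) (hL : 2 * s ^ 3 + 5 * s ^ 2 + 1 ≤ L) (hkL : L ≤ k)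
    (hj1 : s + 1 ≤ j) (hj2 : j ≤ 2 * s ^ 2 + 5 * s - 1) (hcnt : s ≤ p.parts.count j)
    (hbd : ∀ x ∈ p.parts, s + 1 ≤ x ∧ x ≤ s + L) (hknot : k ∉ p.parts)
    (hmul : ∀ a : ℕ, 2 ≤ a → a * s ∉ p.parts) :
    (s ∈ (mypart12 s j p h2s hj1 hcnt).parts ∧
      ∀ x ∈ (mypart12 s j p h2s hj1 hcnt).parts, s ≤ x ∧ x ≤ s + L) ∧
    k ∉ (mypart12 s j p h2s hj1 hcnt).parts ∧
    Multiset.count s (mypart12 s j p h2s hj1 hcnt).parts = 1 ∧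
    ∃ i : ℕ, 2 ≤ i ∧ Multiset.count (i * s) (mypart12 s j p h2s hj1 hcnt).parts = 1 ∧
      ∀ x : ℕ, x ≠ 1 → x ≠ i → x * s ∉ (mypart12 s j p h2s hj1 hcnt).parts := by
  have hsub : p.parts - replicate s j ≤ p.parts := tsub_le_self
  have hjs : (j - 1) * s < L := by
    have h1 : j + 1 ≤ 2 * s ^ 2 + 5 * s := by omega
    have h2 : (j - 1) + 2 ≤ 2 * s ^ 2 + 5 * s := by omega
    have h3 : ((j - 1) + 2) * s ≤ (2 * s ^ 2 + 5 * s) * s :=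
      Nat.mul_le_mul_right s h2
    have h4 : (j - 1) * s + 2 * s ≤ 2 * s ^ 3 + 5 * s ^ 2 := by nlinarith
    omega
  have hsL : s < L := by nlinarith
  have hjne : (j - 1) * s ≠ s := by
    have : 2 * s ≤ (j - 1) * s := Nat.mul_le_mul_right s (by omega)
    omega
  have hsnot : s ∉ p.parts := fun h => by have := (hbd s h).1; omega
  have hjsnot : (j - 1) * s ∉ p.parts := hmul (j - 1) (by omega)
  refine ⟨⟨?_, ?_⟩, ?_, ?_, j - 1, by omega, ?_, ?_⟩
  · simp [mypart12]
  · intro x hx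
    simp only [mypart12, mem_cons] at hx
    rcases hx with rfl | rfl | hx
    · constructor
      · calc s ≤ 2 * s := by omega
          _ ≤ (j - 1) * s := Nat.mul_le_mul_right s (by omega)
      · omega
    · omega
    · have := hbd x (mem_of_le hsub hx)
      omega
  · simp only [mypart12, mem_cons, not_or]
    refine ⟨by omega, by omega, fun h => hknot (mem_of_le hsub h)⟩
  · simp only [mypart12, count_cons]
    rw [count_eq_zero_of_notMem (fun h => hsnot (mem_of_le hsub h))]
    simp [hjne, Ne.symm hjne]
  · simp only [mypart12, count_cons]
    rw [count_eq_zero_of_notMem (fun h => hjsnot (mem_of_le hsub h))]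
    simp [hjne, Ne.symm hjne]
  · intro x hx1 hxi
    simp only [mypart12, mem_cons, not_or]
    refine ⟨?_, ?_, ?_⟩
    · intro h
      exact hxi (Nat.eq_of_mul_eq_mul_right (by omega) h)
    · intro h
      exact hx1 (by nlinarith [Nat.eq_of_mul_eq_mul_right (show 0 < s by omega) (show x * s = 1 * s by omega)])
    · intro h
      have hmem : x * s ∈ p.parts := mem_of_le hsub h
      rcases Nat.lt_or_ge x 2 with hx2 | hx2
      · interval_cases x
        · exact absurd (p.parts_pos hmem) (by simp)
        · exact hx1 rfl
      · exact hmul x hx2 hmem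

lemma mypart12_inj (s : ℕ) {n : ℕ} (j1 j2 : ℕ) (p1 p2 : n.Partition)
    (h2s : 2 ≤ s) (hj11 : s + 1 ≤ j1) (hj21 : s + 1 ≤ j2)
    (hc1 : s ≤ p1.parts.count j1) (hc2 : s ≤ p2.parts.count j2)
    (hm2 : ∀ a : ℕ, 2 ≤ a → a * s ∉ p2.parts)
    (heq : mypart12 s j1 p1 h2s hj11 hc1 = mypart12 s j2 p2 h2s hj21 hc2) :
    p1 = p2 := by
  have hparts : (j1 - 1) * s ::ₘ s ::ₘ (p1.parts - replicate s j1)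
      = (j2 - 1) * s ::ₘ s ::ₘ (p2.parts - replicate s j2) := congrArg Nat.Partition.parts heq
  have hj : j1 = j2 := by
    have hmem : (j1 - 1) * s ∈ (j2 - 1) * s ::ₘ s ::ₘ (p2.parts - replicate s j2) := by
      rw [← hparts]; simp
    simp only [mem_cons] at hmem
    rcases hmem with h | h | h
    · have := Nat.eq_of_mul_eq_mul_right (show 0 < s by omega) h
      omega
    · have : 2 * s ≤ (j1 - 1) * s := Nat.mul_le_mul_right s (by omega)
      omega
    · exact absurd (mem_of_le tsub_le_self h) (hm2 (j1 - 1) (by omega))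
  subst hj
  have h1 : p1.parts - replicate s j1 = p2.parts - replicate s j1 := by
    have := (cons_inj_right _).mp ((cons_inj_right _).mp hparts)
    exact this
  have h2 : p1.parts = p2.parts := by
    have e1 := tsub_add_cancel_of_le (le_count_iff_replicate_le.mp hc1)
    have e2 := tsub_add_cancel_of_le (le_count_iff_replicate_le.mp hc2)
    rw [← e1, ← e2, h1]
  cases p1; cases p2; simpa using h2

theorem stmt_12 (s L k : ℕ) (hs : 1 ≤ s)
    (hL : 2 * s ^ 3 + 5 * s ^ 2 + 1 ≤ L) (hkL : L ≤ k) (hk : k ≤ s + L) (n : ℕ) :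
    -- `C²_{L,s,2}(n)`: partitions of `n` with all parts in `{s+1,…,s+L}`, no part equal
    -- to `k`, no part equal to `a·s` for any `a ≥ 2`, and some part `j` with
    -- `s+1 ≤ j ≤ 2s²+5s−1` occurring at least `s` times.
    Nat.card {p : n.Partition //
        (∀ j ∈ p.parts, s + 1 ≤ j ∧ j ≤ s + L) ∧ k ∉ p.parts ∧
        (∀ a : ℕ, 2 ≤ a → a * s ∉ p.parts) ∧
        ∃ j : ℕ, s + 1 ≤ j ∧ j ≤ 2 * s ^ 2 + 5 * s - 1 ∧ s ≤ Multiset.count j p.parts}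
    -- `F²_{L,s,k}(n)`: partitions of `n` with smallest part `s`, largest part at most
    -- `s+L`, no part equal to `k`, in which `s` occurs exactly once, some part `i·s` with
    -- `i ≥ 2` occurs exactly once, and `j·s` does not occur for any `j ∉ {1, i}`.
    ≤ Nat.card {p : n.Partition //
        (s ∈ p.parts ∧ ∀ j ∈ p.parts, s ≤ j ∧ j ≤ s + L) ∧ k ∉ p.parts ∧
        Multiset.count s p.parts = 1 ∧
        ∃ i : ℕ, 2 ≤ i ∧ Multiset.count (i * s) p.parts = 1 ∧
          ∀ j : ℕ, j ≠ 1 → j ≠ i → j * s ∉ p.parts} := by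
  classical
  rcases Nat.lt_or_ge s 2 with h1 | h2s
  · have hs1 : s = 1 := by omega
    subst hs1
    convert Nat.zero_le _
    rw [Nat.card_eq_zero]
    left
    constructor
    rintro ⟨p, hbd, hk', hmul, j, hj1, hj2, hj3⟩
    have hjmem : j ∈ p.parts := count_pos.mp (by omega)
    exact hmul j (by omega) (by simpa using hjmem)
  · apply Nat.card_le_card_of_injective
      (f := fun x => ⟨mypart12 s x.2.2.2.2.choose x.1 h2s x.2.2.2.2.choose_spec.1
          x.2.2.2.2.choose_spec.2.2,
        mypart12_prop s L k x.1 _ h2s hL hkL x.2.2.2.2.choose_spec.1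
          x.2.2.2.2.choose_spec.2.1 x.2.2.2.2.choose_spec.2.2 x.2.1 x.2.2.1 x.2.2.2.1⟩)
    intro x y hxy
    have heq := Subtype.ext_iff.mp hxy
    simp only at heq
    exact Subtype.ext (mypart12_inj s _ _ x.1 y.1 h2s _ _ _ _ y.2.2.2.1 heq)
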